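/- Combining Lemmas: Let B_a (a ∈ A finite, |A| odd or general) be finite sets with subsets S_a ⊆ B_a and labelings f_a : B_a → C, and let g_a = argmax-with-tiebreak of f_a's counts. Define MAY_a = LOCAL(f_a, S_a) ∪ {g_a}. If for every combination e ∈ ∏_a MAY_a the majority label of e equals c*, then for any family f'_a : B_a → C with f'_a agreeing with f_a on S_a for all a, the majority label of (g(f'_a))_{a∈A} equals c*. -/
import Mathlib


/-- Number of elements of `B` labeled `c` by `f`. -/
def voteCount {β C : Type*} [DecidableEq C] (B : Finset β) (f : β → C) (c : C) : ℕ :=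
  (B.filter fun b => f b = c).card

/-- `c` is the argmax of vote counts over `B` with smaller-label tie-breaking. -/
def majWins {β C : Type*} [DecidableEq C] [LinearOrder C]
    (B : Finset β) (f : β → C) (c : C) : Prop :=
  ∀ c' ≠ c, voteCount B f c' + (if c' < c then 1 else 0) ≤ voteCount B f c

/-- The set of local-malicious labels (Definition 1 of the paper). -/
def localSet {β C : Type*} [DecidableEq β] [DecidableEq C] [LinearOrder C]
    (B S : Finset β) (f : β → C) (c₁ : C) : Set C :=
  {c | c ≠ c₁ ∧ voteCount S f c₁ <
    voteCount S f c + (B \ S).card + (if c < c₁ then 1 else 0)}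

lemma voteCount_mono {β C : Type*} [DecidableEq C] {S B : Finset β} (h : S ⊆ B)
    (f : β → C) (c : C) : voteCount S f c ≤ voteCount B f c :=
  Finset.card_le_card (Finset.filter_subset_filter _ h)

lemma voteCount_le {β C : Type*} [DecidableEq β] [DecidableEq C] {S B : Finset β}
    (f : β → C) (c : C) : voteCount B f c ≤ voteCount S f c + (B \ S).card := by
  calc voteCount B f c ≤ (S.filter (fun b => f b = c) ∪ (B \ S)).card := by
        apply Finset.card_le_card
        intro b hb
        simp only [Finset.mem_filter, Finset.mem_union, Finset.mem_sdiff] at *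
        by_cases hbs : b ∈ S
        · exact Or.inl ⟨hbs, hb.2⟩
        · exact Or.inr ⟨hb.1, hbs⟩
    _ ≤ voteCount S f c + (B \ S).card := Finset.card_union_le _ _

lemma voteCount_congr {β C : Type*} [DecidableEq C] {S : Finset β} {f f' : β → C}
    (h : ∀ b ∈ S, f' b = f b) (c : C) : voteCount S f' c = voteCount S f c := by
  unfold voteCount
  congr 1
  apply Finset.filter_congr
  intro b hb
  simp [h b hb]

/-- Theorem 2 at a single patch region: if every combination of labels from the MAY
sets `LOCAL(f_a,S_a) ∪ {g_a}` has majority `cstar`, then for every family `f'_a`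
agreeing with `f_a` on `S_a`, the tuple of argmax labels of the `f'_a` has majority
label `cstar`. -/
theorem majority_invariant_certification {ι β C : Type*} [DecidableEq β]
    [DecidableEq C] [LinearOrder C]
    (A : Finset ι) (hA : A.Nonempty) (B S : ι → Finset β) (hS : ∀ a ∈ A, S a ⊆ B a)
    (f : ι → β → C) (g : ι → C) (hg : ∀ a ∈ A, majWins (B a) (f a) (g a)) (cstar : C)
    (hinv : ∀ e : ι → C,
      (∀ a ∈ A, e a ∈ localSet (B a) (S a) (f a) (g a) ∪ {g a}) →
      majWins A e cstar) :
    ∀ f' : ι → β → C, (∀ a ∈ A, ∀ b ∈ S a, f' a b = f a b) →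
      ∀ g' : ι → C, (∀ a ∈ A, majWins (B a) (f' a) (g' a)) →
        majWins A g' cstar := by
  intro f' hf' g' hg'
  apply hinv
  intro a ha
  by_cases heq : g' a = g a
  · right; simp [heq]
  · left
    refine ⟨heq, ?_⟩
    have key : voteCount (B a) (f' a) (g a) + (if g a < g' a then 1 else 0)
        ≤ voteCount (B a) (f' a) (g' a) := hg' a ha (g a) (fun h => heq h.symm)
    have h1 : voteCount (S a) (f a) (g a) ≤ voteCount (B a) (f' a) (g a) := by
      rw [← voteCount_congr (hf' a ha)]
      exact voteCount_mono (hS a ha) _ _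
    have h2 : voteCount (B a) (f' a) (g' a)
        ≤ voteCount (S a) (f a) (g' a) + (B a \ S a).card := by
      calc voteCount (B a) (f' a) (g' a)
          ≤ voteCount (S a) (f' a) (g' a) + (B a \ S a).card := voteCount_le _ _
        _ = voteCount (S a) (f a) (g' a) + (B a \ S a).card := by
            rw [voteCount_congr (hf' a ha)]
    rcases lt_or_gt_of_ne heq with hlt | hgt
    · -- g' a < g a
      have : ¬ g a < g' a := not_lt_of_gt hlt
      simp only [if_neg this] at key
      simp only [if_pos hlt]
      omega
    · -- g a < g' a
      simp only [if_pos hgt] at key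
      have : ¬ g' a < g a := not_lt_of_gt hgt
      simp only [if_neg this]
      omega
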